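/- Let k be even with k ≥ 2, write B_k = N_k/D_k in lowest terms, D_k > 0. For every positive integer m, gcd(S_k(m), m^2)/m = gcd(N_k, m)/gcd(D_k, m) (as an identity of rationals, where the left side is an integer divided by m). -/

import Mathlib

def S (k m : ℕ) : ℕ := ∑ j ∈ Finset.Ico 1 m, j ^ k

open Finset

namespace GSMaux

lemma add_le_pow {q : ℕ} (hq : 2 ≤ q) : ∀ {v : ℕ}, 1 ≤ v → v + q ≤ q ^ v + 1 := by
  intro v hv
  induction v with
  | zero => omega
  | succ n ih =>
    rcases Nat.eq_zero_or_pos n with rfl | hn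
    · simpa using by omega
    · have h := ih hn
      have h1 : 1 ≤ q ^ n := Nat.one_le_pow _ _ (by omega)
      have h2 : q ^ (n + 1) = q ^ n * q := pow_succ q n
      nlinarith

lemma add_two_le_two_pow {v : ℕ} (hv : 2 ≤ v) : v + 2 ≤ 2 ^ v := by
  induction v with
  | zero => omega
  | succ n ih =>
    rcases Nat.lt_or_ge n 2 with h | h
    · interval_cases n <;> simp_all <;> omega
    · have := ih h
      have h2 : (2:ℕ) ^ (n + 1) = 2 ^ n * 2 := pow_succ 2 n
      omega

variable {p : ℕ} [hp : Fact p.Prime]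

lemma pow_val_le {s : ℕ} (hs : s ≠ 0) : p ^ padicValNat p s ≤ s :=
  Nat.le_of_dvd (Nat.pos_of_ne_zero hs) pow_padicValNat_dvd

lemma F0 {s : ℕ} (hs : 2 ≤ s) : padicValNat p s + 1 ≤ s := by
  set v := padicValNat p s with hv
  rcases Nat.eq_zero_or_pos v with h | h
  · omega
  · have h2 : 2 ^ v ≤ p ^ v := Nat.pow_le_pow_left hp.out.two_le v
    have h3 : p ^ v ≤ s := pow_val_le (by omega)
    have h4 := add_le_pow (le_refl 2) h
    omega

lemma F1 {s : ℕ} (hs : 2 ≤ s) (hne : ¬(p = 2 ∧ s = 2)) : padicValNat p s + 2 ≤ s := by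
  set v := padicValNat p s with hv
  rcases Nat.eq_zero_or_pos v with h | h
  · omega
  · have h3 : p ^ v ≤ s := pow_val_le (by omega)
    by_cases hp2 : p = 2
    · subst hp2
      have hdvd : 2 ∣ s := dvd_of_one_le_padicValNat h
      have hs4 : 4 ≤ s := by omega
      rcases Nat.lt_or_ge v 2 with h' | h'
      · omega
      · have := add_two_le_two_pow h'
        omega
    · have hp3 : 3 ≤ p := by
        have := hp.out.two_le
        omega
      have h2 : 3 ^ v ≤ p ^ v := Nat.pow_le_pow_left hp3 v
      have h4 := add_le_pow (show 2 ≤ 3 by omega) h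
      omega

lemma F2 {s : ℕ} (h5 : 5 ≤ p) (hs : 1 ≤ s) : padicValNat p s = 0 ∨ padicValNat p s + 4 ≤ s := by
  set v := padicValNat p s with hv
  rcases Nat.eq_zero_or_pos v with h | h
  · exact Or.inl h
  · right
    have h3 : p ^ v ≤ s := pow_val_le (by omega)
    have h2 : 5 ^ v ≤ p ^ v := Nat.pow_le_pow_left h5 v
    have h4 := add_le_pow (show 2 ≤ 5 by omega) h
    omega

lemma faulhaber (k m : ℕ) :
    (∑ j ∈ range m, (j : ℚ) ^ k) = ∑ i ∈ range (k + 1),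
      bernoulli i * (k.choose i) * (m : ℚ) ^ (k + 1 - i) / ((k + 1 - i : ℕ) : ℚ) := by
  rw [sum_range_pow]
  refine sum_congr rfl fun i hi => ?_
  have hik : i ≤ k := by
    have := mem_range.mp hi; omega
  have h : ((k.choose i : ℚ)) * ((k : ℚ) + 1) = ((k + 1).choose i : ℚ) * ((k + 1 - i : ℕ) : ℚ) := by
    have := Nat.choose_mul_succ_eq k i
    exact_mod_cast congrArg (Nat.cast (R := ℚ)) this
  have h1 : ((k : ℚ) + 1) ≠ 0 := by positivity
  have h2 : ((k + 1 - i : ℕ) : ℚ) ≠ 0 := by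
    have : 0 < k + 1 - i := by omega
    exact_mod_cast this.ne'
  rw [div_eq_div_iff h1 h2]
  linear_combination (-(bernoulli i * (m : ℚ) ^ (k + 1 - i))) * h

lemma faulhaber' (k m : ℕ) :
    (∑ j ∈ range m, (j : ℚ) ^ k) - bernoulli k * m
      = ∑ i ∈ range k, bernoulli i * (k.choose i) * (m : ℚ) ^ (k + 1 - i) / ((k + 1 - i : ℕ) : ℚ) := by
  rw [faulhaber k m, sum_range_succ]
  have h : k + 1 - k = 1 := by omega
  rw [h]
  simp [Nat.choose_self]





variable {p : ℕ} [hp : Fact p.Prime]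

lemma pQ_one_lt : (1:ℚ) < p := by exact_mod_cast hp.out.one_lt
lemma pQ_pos : (0:ℚ) < p := lt_trans one_pos pQ_one_lt

lemma norm_nat_eq {n : ℕ} (hn : n ≠ 0) :
    padicNorm p (n : ℚ) = (p : ℚ) ^ (-(padicValNat p n : ℤ)) := by
  rw [padicNorm.eq_zpow_of_nonzero (by exact_mod_cast hn), padicValRat.of_nat]

lemma zpow_le_zpow {a b : ℤ} (h : a ≤ b) : (p:ℚ) ^ (-b) ≤ (p:ℚ) ^ (-a) :=
  zpow_le_zpow_right₀ (le_of_lt pQ_one_lt) (by omega)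

lemma norm_le_iff {n : ℕ} (hn : n ≠ 0) {c : ℤ} :
    padicNorm p (n : ℚ) ≤ (p:ℚ) ^ (-c) ↔ c ≤ (padicValNat p n : ℤ) := by
  rw [norm_nat_eq hn, zpow_le_zpow_iff_right₀ pQ_one_lt]
  omega

lemma norm_eq_iff {n : ℕ} (hn : n ≠ 0) {c : ℤ} :
    padicNorm p (n : ℚ) = (p:ℚ) ^ (-c) ↔ (padicValNat p n : ℤ) = c := by
  rw [norm_nat_eq hn]
  rw [zpow_right_inj₀ pQ_pos pQ_one_lt.ne']
  omega

lemma term_bound (c : ℤ) {i k m : ℕ} (hik : i ≤ k) (hm : m ≠ 0)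
    (hB : padicNorm p (bernoulli i) ≤ (p:ℚ) ^ (1:ℤ))
    (hc : c + (padicValNat p (k + 1 - i) : ℤ) + 1 ≤ ((k + 1 - i : ℕ) : ℤ) * (padicValNat p m : ℤ)) :
    padicNorm p (bernoulli i * (k.choose i) * (m : ℚ) ^ (k + 1 - i) / ((k + 1 - i : ℕ) : ℚ))
      ≤ (p:ℚ) ^ (-c) := by
  set s := k + 1 - i with hs
  have hs0 : s ≠ 0 := by omega
  set a : ℤ := (padicValNat p m : ℤ) with ha
  set vs : ℤ := (padicValNat p s : ℤ) with hvs
  have hms : padicNorm p ((m : ℚ) ^ s) = (p:ℚ) ^ (-((s : ℤ) * a)) := by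
    have h1 : ((m : ℚ)) ^ s = ((m ^ s : ℕ) : ℚ) := by push_cast; ring
    rw [h1, norm_nat_eq (pow_ne_zero _ hm), padicValNat.pow m s,
      show ((s * padicValNat p m : ℕ) : ℤ) = (s : ℤ) * a by rw [Nat.cast_mul]]
  have hsn : padicNorm p ((s : ℕ) : ℚ) = (p:ℚ) ^ (-vs) := norm_nat_eq hs0
  rw [padicNorm.div, padicNorm.mul, padicNorm.mul, hms, hsn]
  rw [div_le_iff₀ (zpow_pos pQ_pos _)]
  have h1 : padicNorm p (bernoulli i) * padicNorm p ((k.choose i : ℕ) : ℚ) * (p:ℚ) ^ (-((s:ℤ) * a))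
      ≤ (p:ℚ) ^ (1:ℤ) * 1 * (p:ℚ) ^ (-((s:ℤ) * a)) := by
    apply mul_le_mul_of_nonneg_right _ (zpow_nonneg pQ_pos.le _)
    exact mul_le_mul hB (padicNorm.of_nat _) (padicNorm.nonneg _) (zpow_nonneg pQ_pos.le _)
  refine le_trans h1 ?_
  rw [mul_one, ← zpow_add₀ (ne_of_gt pQ_pos), ← zpow_add₀ (ne_of_gt pQ_pos)]
  apply zpow_le_zpow_right₀ (le_of_lt pQ_one_lt)
  omega

lemma bernoulli_odd_zero {i : ℕ} (h : Odd i) (h1 : 1 < i) : bernoulli i = 0 := by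
  rw [bernoulli_eq_bernoulli'_of_ne_one (by omega), bernoulli'_eq_zero_of_odd h h1]

lemma norm_bernoulli_le (p : ℕ) [hp : Fact p.Prime] (n : ℕ) :
    padicNorm p (bernoulli n) ≤ (p:ℚ) ^ (1:ℤ) := by
  induction n using Nat.strong_induction_on with
  | _ n ih =>
  rcases Nat.eq_zero_or_pos n with rfl | hn
  · rw [bernoulli_zero, padicNorm.one]
    calc (1:ℚ) = (p:ℚ)^(0:ℤ) := by simp
    _ ≤ (p:ℚ)^(1:ℤ) := zpow_le_zpow_right₀ (le_of_lt pQ_one_lt) (by omega)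
  have key := faulhaber' n p
  have hone : (1:ℚ) = (p:ℚ)^(-(0:ℤ)) := by simp
  have hTp : padicNorm p (∑ j ∈ range p, (j:ℚ)^n) ≤ 1 := by
    have h1 : (∑ j ∈ range p, (j:ℚ)^n) = ((∑ j ∈ range p, j^n : ℕ) : ℚ) := by push_cast; ring
    rw [h1]; exact padicNorm.of_nat _
  have hsum : padicNorm p (∑ i ∈ range n,
      bernoulli i * (n.choose i) * (p:ℚ)^(n+1-i)/((n+1-i : ℕ):ℚ)) ≤ 1 := by
    apply padicNorm.sum_le' _ zero_le_one
    intro i hi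
    have hi' : i < n := mem_range.mp hi
    rw [hone]
    apply term_bound 0 (le_of_lt hi') hp.out.ne_zero (ih i hi')
    have hval : padicValNat p p = 1 := padicValNat.self hp.out.one_lt
    rw [hval]
    have hs2 : 2 ≤ n + 1 - i := by omega
    have := F0 (p := p) hs2
    omega
  have hBp : padicNorm p (bernoulli n * p) ≤ 1 := by
    have heq : bernoulli n * (p:ℚ) = (∑ j ∈ range p, (j:ℚ)^n)
        - (∑ i ∈ range n, bernoulli i * (n.choose i) * (p:ℚ)^(n+1-i)/((n+1-i : ℕ):ℚ)) := by
      rw [← key]; ring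
    rw [heq]
    exact le_trans padicNorm.sub (max_le hTp hsum)
  rw [padicNorm.mul, padicNorm.padicNorm_p_of_prime] at hBp
  calc padicNorm p (bernoulli n) = padicNorm p (bernoulli n) * (p:ℚ)⁻¹ * p := by
        rw [inv_mul_cancel_right₀ (ne_of_gt pQ_pos)]
  _ ≤ 1 * p := by
        apply mul_le_mul_of_nonneg_right hBp (le_of_lt pQ_pos)
  _ = (p:ℚ)^(1:ℤ) := by simp


variable {p : ℕ} [hp : Fact p.Prime]

lemma master (p k m : ℕ) [hp : Fact p.Prime] (hk : 2 ≤ k) (hke : Even k)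
    (hpm : p ∣ m) (hm : m ≠ 0) (e : ℤ) (he : e = 1 ∨ (e = 0 ∧ 5 ≤ p)) :
    padicNorm p ((∑ j ∈ range m, (j : ℚ) ^ k) - bernoulli k * m)
      ≤ (p:ℚ) ^ (-(2 * (padicValNat p m : ℤ) - e)) := by
  have ha : 1 ≤ padicValNat p m :=
    one_le_padicValNat_of_dvd hm hpm
  set a := padicValNat p m with hadef
  rw [faulhaber' k m]
  apply padicNorm.sum_le' _ (zpow_nonneg pQ_pos.le _)
  intro i hi
  have hik : i < k := mem_range.mp hi
  have hs2 : 2 ≤ k + 1 - i := by omega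
  by_cases hodd : Odd i ∧ 1 < i
  · rw [bernoulli_odd_zero hodd.1 hodd.2]
    simpa using zpow_nonneg pQ_pos.le _
  by_cases hik2 : i = 1 ∧ k = 2
  · obtain ⟨rfl, rfl⟩ := hik2
    have hterm : bernoulli 1 * ((2:ℕ).choose 1 : ℚ) * (m:ℚ) ^ (2 + 1 - 1) / ((2 + 1 - 1 : ℕ) : ℚ)
        = -(((m ^ 2 : ℕ) : ℚ) / ((2 : ℕ) : ℚ)) := by
      rw [bernoulli_one, show ((2:ℕ).choose 1) = 2 from rfl]; push_cast; ring
    rw [hterm, padicNorm.neg, padicNorm.div,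
      norm_nat_eq (pow_ne_zero 2 hm), norm_nat_eq (two_ne_zero), padicValNat.pow m 2,
      div_eq_mul_inv, ← zpow_neg, ← zpow_add₀ (ne_of_gt pQ_pos)]
    apply zpow_le_zpow_right₀ pQ_one_lt.le
    have hv2 : (padicValNat p 2 : ℤ) ≤ e := by
      rcases he with rfl | ⟨rfl, h5⟩
      · have := F0 (p := p) (le_refl 2); omega
      · have h2 : padicValNat p 2 = 0 := by
          apply padicValNat.eq_zero_of_not_dvd
          intro hdvd
          have := Nat.le_of_dvd (by norm_num) hdvd
          omega
        omega
    omega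
  · -- generic branch
    have hs3 : 3 ≤ k + 1 - i := by
      rcases Nat.even_or_odd i with he' | ho
      · obtain ⟨t, ht⟩ := he'
        obtain ⟨u, hu⟩ := hke
        omega
      · have hi1 : i = 1 := by
          rcases Nat.lt_or_ge i 2 with h | h
          · rcases ho with ⟨c, hc⟩; omega
          · exact absurd ⟨ho, by omega⟩ hodd
        subst hi1
        obtain ⟨u, hu⟩ := hke
        omega
    apply term_bound (2 * (a:ℤ) - e) (le_of_lt hik) hm (norm_bernoulli_le p i)
    rcases he with rfl | ⟨rfl, h5⟩
    · have hF := F1 (p := p) hs2 (by omega)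
      have h1 : (padicValNat p (k + 1 - i) : ℤ) ≤ ((k + 1 - i : ℕ) : ℤ) - 2 := by omega
      have h2 : ((k + 1 - i : ℕ) : ℤ) - 2 ≤ (((k + 1 - i : ℕ) : ℤ) - 2) * a := by
        nlinarith [ha]
      nlinarith [ha]
    · have hF := F2 (p := p) (s := k + 1 - i) h5 (by omega)
      have h1 : (padicValNat p (k + 1 - i) : ℤ) + 1 ≤ ((k + 1 - i : ℕ) : ℤ) - 2 := by omega
      nlinarith [ha]

lemma norm_bernoulli_eq (p k : ℕ) [hp : Fact p.Prime] (hk : 2 ≤ k) (hke : Even k)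
    (hS : ¬ p ∣ (∑ j ∈ range p, j ^ k)) : padicNorm p (bernoulli k) = (p:ℚ) ^ (1:ℤ) := by
  have hM := master p k p hk hke dvd_rfl hp.out.ne_zero 1 (Or.inl rfl)
  rw [padicValNat.self hp.out.one_lt] at hM
  have hMlt : padicNorm p ((∑ j ∈ range p, (j : ℚ) ^ k) - bernoulli k * p) < 1 := by
    refine lt_of_le_of_lt hM ?_
    calc (p:ℚ) ^ (-(2 * (1:ℤ) - 1)) < (p:ℚ) ^ (0:ℤ) :=
      zpow_lt_zpow_right₀ pQ_one_lt (by omega)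
    _ = 1 := by simp
  have hT : padicNorm p (∑ j ∈ range p, (j:ℚ)^k) = 1 := by
    have h1 : (∑ j ∈ range p, (j:ℚ)^k) = ((∑ j ∈ range p, j^k : ℕ) : ℚ) := by push_cast; ring
    rw [h1]
    exact (padicNorm.nat_eq_one_iff _).mpr hS
  have hkey : padicNorm p (bernoulli k * p) = 1 := by
    have heq : bernoulli k * (p:ℚ) = (∑ j ∈ range p, (j:ℚ)^k)
        + -((∑ j ∈ range p, (j:ℚ)^k) - bernoulli k * p) := by ring
    have hne : padicNorm p (∑ j ∈ range p, (j:ℚ)^k)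
        ≠ padicNorm p (-((∑ j ∈ range p, (j:ℚ)^k) - bernoulli k * p)) := by
      rw [padicNorm.neg, hT]
      exact fun h => absurd h.symm (ne_of_lt hMlt)
    rw [heq, padicNorm.add_eq_max_of_ne hne, padicNorm.neg, hT]
    exact max_eq_left (le_of_lt hMlt)
  rw [padicNorm.mul, padicNorm.padicNorm_p_of_prime] at hkey
  have hpne : (p:ℚ) ≠ 0 := ne_of_gt pQ_pos
  field_simp at hkey
  rw [hkey]
  simp

lemma norm_bernoulli_two (k : ℕ) (hk : 2 ≤ k) (hke : Even k) :
    padicNorm 2 (bernoulli k) = ((2:ℕ):ℚ) ^ (1:ℤ) := by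
  haveI : Fact (Nat.Prime 2) := ⟨Nat.prime_two⟩
  apply norm_bernoulli_eq 2 k hk hke
  have h : (∑ j ∈ range 2, j ^ k) = 1 := by
    rw [show (2:ℕ) = 1 + 1 from rfl, Finset.sum_range_succ, Finset.sum_range_succ]
    simp [(show k ≠ 0 by omega)]
  rw [h]
  norm_num

lemma norm_bernoulli_three (k : ℕ) (hk : 2 ≤ k) (hke : Even k) :
    padicNorm 3 (bernoulli k) = ((3:ℕ):ℚ) ^ (1:ℤ) := by
  haveI : Fact (Nat.Prime 3) := ⟨Nat.prime_three⟩
  apply norm_bernoulli_eq 3 k hk hke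
  have h : (∑ j ∈ range 3, j ^ k) = 1 + 2 ^ k := by
    rw [show (3:ℕ) = 2 + 1 from rfl, Finset.sum_range_succ,
      show (2:ℕ) = 1 + 1 from rfl, Finset.sum_range_succ, Finset.sum_range_succ]
    simp [(show k ≠ 0 by omega)]
  rw [h]
  obtain ⟨t, ht⟩ := hke
  subst ht
  have h4 : (2:ℕ) ^ (t + t) = 4 ^ t := by rw [pow_add, ← mul_pow]; norm_num
  have hmod : (4:ℕ) ^ t % 3 = 1 := by
    rw [Nat.pow_mod]; simp
  intro hdvd
  rw [h4] at hdvd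
  omega

lemma num_val_zero {p : ℕ} [hp : Fact p.Prime] {q : ℚ} (h : p ∣ q.den) :
    padicValNat p q.num.natAbs = 0 := by
  apply padicValNat.eq_zero_of_not_dvd
  intro hdvd
  have hd : p ∣ Nat.gcd q.num.natAbs q.den := Nat.dvd_gcd hdvd h
  rw [Nat.Coprime.gcd_eq_one q.reduced] at hd
  exact absurd (Nat.dvd_one.mp hd) hp.out.one_lt.ne'

lemma val_den_of_norm {p : ℕ} [hp : Fact p.Prime] {k : ℕ}
    (h : padicNorm p (bernoulli k) = ((p:ℕ):ℚ) ^ (1:ℤ)) :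
    bernoulli k ≠ 0 ∧ padicValNat p (bernoulli k).den = 1 := by
  have hne : bernoulli k ≠ 0 := by
    intro h0
    rw [h0, padicNorm.zero] at h
    exact absurd h.symm (ne_of_gt (zpow_pos pQ_pos _))
  have hval : padicValRat p (bernoulli k) = -1 := by
    rw [padicNorm.eq_zpow_of_nonzero hne] at h
    have := (zpow_right_inj₀ pQ_pos pQ_one_lt.ne').mp h
    omega
  have hvr : padicValRat p (bernoulli k)
      = (padicValNat p (bernoulli k).num.natAbs : ℤ) - padicValNat p (bernoulli k).den := rfl
  rw [hvr] at hval
  have hden1 : 1 ≤ padicValNat p (bernoulli k).den := by omega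
  have hnum0 : padicValNat p (bernoulli k).num.natAbs = 0 :=
    num_val_zero (dvd_of_one_le_padicValNat hden1)
  exact ⟨hne, by omega⟩

lemma pv_gcd {p a b : ℕ} (hpp : p.Prime) (ha : a ≠ 0) (hb : b ≠ 0) :
    padicValNat p (Nat.gcd a b) = min (padicValNat p a) (padicValNat p b) := by
  have h := Nat.factorization_gcd ha hb
  have h2 : (Nat.gcd a b).factorization p = (a.factorization ⊓ b.factorization) p := by rw [h]
  simpa [Nat.factorization_def _ hpp, Finsupp.inf_apply] using h2

lemma S_eq (k m : ℕ) (hk : 1 ≤ k) : S k m = ∑ j ∈ range m, j ^ k := by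
  rcases Nat.eq_zero_or_pos m with rfl | hm
  · simp [S]
  · unfold S
    rw [range_eq_Ico, ← Finset.sum_Ico_consecutive (fun j => j ^ k) (Nat.zero_le 1) hm]
    have h0 : ∑ j ∈ Ico 0 1, j ^ k = 0 := by
      simp [(show k ≠ 0 by omega)]
    rw [h0, zero_add]




end GSMaux

open GSMaux Finset in
theorem gcd_S_m_sq (k m : ℕ) (hk : 2 ≤ k) (hke : Even k) (hm : 0 < m) :
    Nat.gcd (S k m) (m ^ 2) * Nat.gcd (bernoulli k).den m
      = m * Int.gcd (bernoulli k).num (m : ℤ) := by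
  haveI h2f : Fact (Nat.Prime 2) := ⟨Nat.prime_two⟩
  haveI h3f : Fact (Nat.Prime 3) := ⟨Nat.prime_three⟩
  obtain ⟨hBne, hvD2⟩ := val_den_of_norm (norm_bernoulli_two k hk hke)
  obtain ⟨-, hvD3⟩ := val_den_of_norm (norm_bernoulli_three k hk hke)
  set N := (bernoulli k).num with hNdef
  set D := (bernoulli k).den with hDdef
  have hDne : D ≠ 0 := (bernoulli k).den_nz
  have hNne : N.natAbs ≠ 0 := Int.natAbs_ne_zero.mpr (Rat.num_ne_zero.mpr hBne)
  rcases Nat.lt_or_ge m 2 with hm1 | hm2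
  · have hm1' : m = 1 := by omega
    subst hm1'
    simp [S]
  · have hm0 : m ≠ 0 := by omega
    have hSne : S k m ≠ 0 := by
      have h1 : 1 ≤ S k m := by
        have hmem : (1:ℕ) ∈ Finset.Ico 1 m := by simp; omega
        calc 1 = 1 ^ k := (one_pow k).symm
        _ ≤ ∑ j ∈ Finset.Ico 1 m, j ^ k :=
            Finset.single_le_sum (fun i _ => Nat.zero_le _) hmem
      omega
    have h2dD : 2 ∣ D := dvd_of_one_le_padicValNat (by omega)
    have h3dD : 3 ∣ D := dvd_of_one_le_padicValNat (by omega)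
    have hgcdint : Int.gcd N (m:ℤ) = Nat.gcd N.natAbs m := by
      unfold Int.gcd; rw [Int.natAbs_natCast]
    rw [hgcdint]
    have hg1 : Nat.gcd (S k m) (m ^ 2) ≠ 0 :=
      (Nat.gcd_pos_of_pos_right _ (by positivity)).ne'
    have hg2 : Nat.gcd D m ≠ 0 := (Nat.gcd_pos_of_pos_right _ (by omega)).ne'
    have hg3 : Nat.gcd N.natAbs m ≠ 0 := (Nat.gcd_pos_of_pos_right _ (by omega)).ne'
    rw [Nat.eq_iff_prime_padicValNat_eq _ _ (mul_ne_zero hg1 hg2) (mul_ne_zero hm0 hg3)]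
    intro p hpp
    haveI : Fact p.Prime := ⟨hpp⟩
    have hga : padicValNat p (Nat.gcd (S k m) (m ^ 2))
        = min (padicValNat p (S k m)) (2 * padicValNat p m) := by
      rw [pv_gcd hpp hSne (pow_ne_zero 2 hm0), padicValNat.pow m 2]
    have hgb : padicValNat p (Nat.gcd D m) = min (padicValNat p D) (padicValNat p m) :=
      pv_gcd hpp hDne hm0
    have hgc : padicValNat p (Nat.gcd N.natAbs m)
        = min (padicValNat p N.natAbs) (padicValNat p m) := pv_gcd hpp hNne hm0
    rw [padicValNat.mul hg1 hg2, padicValNat.mul hm0 hg3, hga, hgb, hgc]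
    set a := padicValNat p m with hadef
    set vS := padicValNat p (S k m) with hvSdef
    set vN := padicValNat p N.natAbs with hvNdef
    set vD := padicValNat p D with hvDdef
    rcases Nat.eq_zero_or_pos a with ha0 | ha1
    · simp [ha0]
    have hpm : p ∣ m := dvd_of_one_le_padicValNat ha1
    have hnormB : padicNorm p (bernoulli k) = (p:ℚ) ^ (-((vN:ℤ) - vD)) := by
      rw [padicNorm.eq_zpow_of_nonzero hBne]
      rfl
    have hScast : ((S k m : ℕ) : ℚ) = ∑ j ∈ range m, (j:ℚ)^k := by
      rw [S_eq k m (by omega)]; push_cast; ring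
    have hdecomp : ((S k m : ℕ) : ℚ)
        = ((∑ j ∈ range m, (j:ℚ)^k) - bernoulli k * m) + bernoulli k * m := by
      rw [hScast]; ring
    have hnormBm : padicNorm p (bernoulli k * m) = (p:ℚ) ^ (-((vN:ℤ) - vD + a)) := by
      rw [padicNorm.mul, hnormB, norm_nat_eq hm0, ← zpow_add₀ (ne_of_gt pQ_pos)]
      congr 1
      ring
    by_cases hpD : p ∣ D
    · have hvN0 : vN = 0 := num_val_zero hpD
      have hvD1 : vD = 1 := by
        have hnb := norm_bernoulli_le p k
        rw [hnormB] at hnb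
        have h1 := (zpow_le_zpow_iff_right₀ pQ_one_lt).mp hnb
        have h2 : 1 ≤ vD := one_le_padicValNat_of_dvd (by omega) hpD
        omega
      have hM := master p k m hk hke hpm hm0 1 (Or.inl rfl)
      have hBm' : padicNorm p (bernoulli k * m) = (p:ℚ) ^ (-((a:ℤ) - 1)) := by
        rw [hnormBm, hvN0, hvD1]
        congr 1
        all_goals push_cast
        all_goals try ring
      have hSnorm : padicNorm p ((S k m : ℕ) : ℚ) = (p:ℚ) ^ (-((a:ℤ) - 1)) := by
        rw [hdecomp]
        have hne2 : padicNorm p ((∑ j ∈ range m, (j:ℚ)^k) - bernoulli k * m)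
            ≠ padicNorm p (bernoulli k * m) := by
          rw [hBm']
          exact ne_of_lt (lt_of_le_of_lt hM (zpow_lt_zpow_right₀ pQ_one_lt (by omega)))
        rw [padicNorm.add_eq_max_of_ne hne2, hBm', max_eq_right]
        exact le_trans hM (zpow_le_zpow (by omega))
      have hvS : (vS:ℤ) = (a:ℤ) - 1 := (norm_eq_iff hSne).mp hSnorm
      omega
    · have hvD0 : vD = 0 := padicValNat.eq_zero_of_not_dvd hpD
      have hp5 : 5 ≤ p := by
        have h2le := hpp.two_le
        rcases Nat.lt_or_ge p 5 with h | h
        · exfalso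
          interval_cases p
          · exact hpD h2dD
          · exact hpD h3dD
          · exact absurd hpp (by norm_num)
        · exact h
      have hM := master p k m hk hke hpm hm0 0 (Or.inr ⟨rfl, hp5⟩)
      have hM' : padicNorm p ((∑ j ∈ range m, (j:ℚ)^k) - bernoulli k * m)
          ≤ (p:ℚ) ^ (-(2 * (a:ℤ))) := by
        refine le_trans hM (le_of_eq ?_)
        congr 1
        try ring
      have hBm' : padicNorm p (bernoulli k * m) = (p:ℚ) ^ (-((vN:ℤ) + a)) := by
        rw [hnormBm, hvD0]
        congr 1
        all_goals push_cast
        all_goals try ring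
      rcases Nat.lt_or_ge vN a with hlt | hge
      · have hSnorm : padicNorm p ((S k m : ℕ) : ℚ) = (p:ℚ) ^ (-((vN:ℤ) + a)) := by
          rw [hdecomp]
          have hne2 : padicNorm p ((∑ j ∈ range m, (j:ℚ)^k) - bernoulli k * m)
              ≠ padicNorm p (bernoulli k * m) := by
            rw [hBm']
            exact ne_of_lt (lt_of_le_of_lt hM' (zpow_lt_zpow_right₀ pQ_one_lt (by omega)))
          rw [padicNorm.add_eq_max_of_ne hne2, hBm', max_eq_right]
          exact le_trans hM' (zpow_le_zpow (by omega))
        have hvS : (vS:ℤ) = (vN:ℤ) + a := (norm_eq_iff hSne).mp hSnorm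
        omega
      · have hSle : padicNorm p ((S k m : ℕ) : ℚ) ≤ (p:ℚ) ^ (-(2 * (a:ℤ))) := by
          rw [hdecomp]
          refine le_trans padicNorm.nonarchimedean (max_le hM' ?_)
          rw [hBm']
          exact zpow_le_zpow (by omega)
        have hvSge : 2 * (a:ℤ) ≤ (vS:ℤ) := (norm_le_iff hSne).mp hSle
        omega
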